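/- arXiv:1510.07379 — 5 statements merged into one kernel-verified Lean document; each statement's English description precedes it below -/
import Mathlib

section
/- Let A ∈ ℂ^{n×N} satisfy A A^* = I_n, let x0 ∈ ℂ^n, b = |A^* x0|, and let X ⊆ ℂ^n be a nonempty closed convex set containing 0, with nearest-point projection P_X. Define x^{(k+1)} = P_X(A(b ⊙ phase(A^* x^{(k)}))) from any starting point x^{(1)} ∈ X. Then: (i) ‖x^{(k)}‖ ≤ ‖b‖ for all k ≥ 2, so the sequence is bounded; (ii) ‖x^{(k+1)} − x^{(k)}‖ → 0 as k → ∞; and (iii) every accumulation point x_* of the sequence is a fixed point of AP, i.e. there exists u ∈ ℂ^N with |u_j| = 1 for all j and u_j = 1 whenever (A^* x_*)_j ≠ 0, such that x_* = P_X(A(b ⊙ u ⊙ phase(A^* x_*))). -/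
/-- `phase z = z/|z|`, with the convention `phase 0 = 1`. -/
noncomputable def phase (z : ℂ) : ℂ := if z = 0 then 1 else z / (‖z‖ : ℂ)

lemma phase_abs (z : ℂ) : ‖phase z‖ = 1 := by
  unfold phase
  split
  · simp
  · rename_i h
    rw [norm_div, Complex.norm_of_nonneg (norm_nonneg z),
      div_self (norm_ne_zero_iff.mpr h)]

lemma sub_phase_abs (z : ℂ) (t : ℝ) :
    ‖(z - t * phase z)‖ = |‖z‖ - t| := by
  unfold phase
  split
  · rename_i h
    subst h
    simp [abs_sub_comm]
  · rename_i h
    have hz : (‖z‖ : ℂ) ≠ 0 := by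
      exact_mod_cast norm_ne_zero_iff.mpr h
    have : z - t * (z / ‖z‖) = (z / ‖z‖) * ((‖z‖ : ℝ) - t : ℝ) := by
      push_cast
      field_simp
    rw [this, norm_mul, norm_div, Complex.norm_of_nonneg (norm_nonneg z),
      div_self (norm_ne_zero_iff.mpr h), one_mul, Complex.norm_real, Real.norm_eq_abs]

lemma abs_sub_le_of_unimodular (z u : ℂ) (t : ℝ) (ht : 0 ≤ t) (hu : ‖u‖ = 1) :
    (‖z‖ - t)^2 ≤ ‖(z - t * u)‖^2 := by
  have h1 : ‖((t : ℂ) * u)‖ = t := by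
    rw [norm_mul, Complex.norm_real, hu, Real.norm_of_nonneg ht, mul_one]
  have h2 : |‖z‖ - t| ≤ ‖(z - t * u)‖ := by
    calc |‖z‖ - t| = |‖z‖ - ‖((t:ℂ) * u)‖| := by rw [h1]
    _ ≤ ‖(z - t * u)‖ := abs_norm_sub_norm_le _ _
  calc (‖z‖ - t)^2 = |‖z‖ - t|^2 := (sq_abs _).symm
  _ ≤ ‖(z - t*u)‖^2 := by
      apply pow_le_pow_left₀ (abs_nonneg _) h2

lemma sq_le_imp {a b : ℝ} (hb : 0 ≤ b) (h : a^2 ≤ b^2) : a ≤ b := by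
  nlinarith [sq_nonneg (a - b), sq_nonneg (a + b)]

lemma phase_continuousAt {z : ℂ} (hz : z ≠ 0) : ContinuousAt phase z := by
  have hopen : {w : ℂ | w ≠ 0} ∈ nhds z := (isOpen_ne).mem_nhds hz
  have heq : phase =ᶠ[nhds z] fun w => w / (‖w‖ : ℂ) := by
    filter_upwards [hopen] with w hw
    simp [phase, hw]
  refine ContinuousAt.congr ?_ heq.symm
  apply ContinuousAt.div continuousAt_id
  · exact (Complex.continuous_ofReal.comp continuous_norm).continuousAt
  · exact_mod_cast norm_ne_zero_iff.mpr hz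

section proj
variable {E : Type*} [NormedAddCommGroup E] [InnerProductSpace ℝ E]
  {X : Set E} {P : E → E}

lemma proj_inner_le (hXconv : Convex ℝ X)
    (hP : ∀ y, P y ∈ X ∧ ∀ z ∈ X, ‖y - P y‖ ≤ ‖y - z‖)
    (y : E) {z : E} (hz : z ∈ X) : (inner ℝ (y - P y) (z - P y) : ℝ) ≤ 0 := by
  have hne : Nonempty X := ⟨⟨P y, (hP y).1⟩⟩
  have hinf : ‖y - P y‖ = ⨅ w : X, ‖y - w‖ := by
    apply le_antisymm
    · exact le_ciInf fun w => (hP y).2 w w.2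
    · have hbdd : BddBelow (Set.range fun w : X => ‖y - (w : E)‖) := by
        refine ⟨0, ?_⟩
        rintro r ⟨w, rfl⟩
        exact norm_nonneg _
      exact ciInf_le hbdd ⟨P y, (hP y).1⟩
  exact (norm_eq_iInf_iff_real_inner_le_zero hXconv (hP y).1).mp hinf z hz

lemma proj_three_point (hXconv : Convex ℝ X)
    (hP : ∀ y, P y ∈ X ∧ ∀ z ∈ X, ‖y - P y‖ ≤ ‖y - z‖)
    (y : E) {z : E} (hz : z ∈ X) :
    ‖P y - y‖^2 + ‖z - P y‖^2 ≤ ‖z - y‖^2 := by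
  have h := proj_inner_le hXconv hP y hz
  have hzy : z - y = (z - P y) + (P y - y) := by abel
  have hexp : ‖z - y‖^2 = ‖z - P y‖^2 + 2 * (inner ℝ (z - P y) (P y - y) : ℝ) + ‖P y - y‖^2 := by
    rw [hzy, norm_add_sq_real]
  have hin : (inner ℝ (z - P y) (P y - y) : ℝ) = -(inner ℝ (y - P y) (z - P y) : ℝ) := by
    rw [real_inner_comm, show P y - y = -(y - P y) by abel, inner_neg_left]
  rw [hexp, hin]
  linarith

lemma proj_nonexpansive (hXconv : Convex ℝ X)
    (hP : ∀ y, P y ∈ X ∧ ∀ z ∈ X, ‖y - P y‖ ≤ ‖y - z‖)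
    (y y' : E) : ‖P y - P y'‖ ≤ ‖y - y'‖ := by
  have h1 := proj_inner_le hXconv hP y (hP y').1
  have h2 := proj_inner_le hXconv hP y' (hP y).1
  have key : ‖P y - P y'‖^2 ≤ (inner ℝ (y - y') (P y - P y') : ℝ) := by
    have e : (inner ℝ (P y - P y') (P y - P y') : ℝ) = ‖P y - P y'‖^2 :=
      real_inner_self_eq_norm_sq _
    simp only [inner_sub_left, inner_sub_right] at h1 h2 e ⊢
    have c1 : (inner ℝ (P y') (P y) : ℝ) = inner ℝ (P y) (P y') := real_inner_comm _ _
    linarith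
  have hle : (inner ℝ (y - y') (P y - P y') : ℝ) ≤ ‖y - y'‖ * ‖P y - P y'‖ :=
    real_inner_le_norm _ _
  rcases eq_or_lt_of_le (norm_nonneg (P y - P y')) with h0 | h0
  · rw [← h0]; exact norm_nonneg _
  · have h3 : ‖P y - P y'‖^2 ≤ ‖y - y'‖ * ‖P y - P y'‖ := le_trans key hle
    have h4 : ‖P y - P y'‖ * ‖P y - P y'‖ ≤ ‖y - y'‖ * ‖P y - P y'‖ := by nlinarith
    exact le_of_mul_le_mul_right h4 h0

lemma proj_norm_le (hXconv : Convex ℝ X)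
    (hP : ∀ y, P y ∈ X ∧ ∀ z ∈ X, ‖y - P y‖ ≤ ‖y - z‖)
    (h0X : (0:E) ∈ X) (y : E) : ‖P y‖ ≤ ‖y‖ := by
  have h := proj_three_point hXconv hP y h0X
  apply sq_le_imp (norm_nonneg _)
  simp only [zero_sub, norm_neg] at h
  nlinarith [sq_nonneg ‖P y - y‖]

end proj


/-- for the AP iteration `x^(k+1) = P_X(A(b ⊙ phase(A^* x^(k))))` with
isometric `A^*` (Parseval frame condition on the columns `a j` of `A`) and `0 ∈ X`:
(i) `‖x^(k)‖ ≤ ‖b‖` for all `k ≥ 2`; (ii) `‖x^(k+1) - x^(k)‖ → 0`; (iii) every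
accumulation point `x_*` of the sequence is a fixed point of AP, i.e. there is a
unimodular `u` with `u j = 1` wherever `(A^* x_*) j ≠ 0` such that
`x_* = P_X(A(b ⊙ u ⊙ phase(A^* x_*)))`. -/
theorem AP_limit_points_are_fixed_points {n N : ℕ}
    (a : Fin N → EuclideanSpace ℂ (Fin n))
    (hiso : ∀ x : EuclideanSpace ℂ (Fin n), ∑ j, (inner ℂ (a j) x : ℂ) • a j = x)
    (x0 : EuclideanSpace ℂ (Fin n))
    (b : EuclideanSpace ℝ (Fin N)) (hb : ∀ j, b j = ‖(inner ℂ (a j) x0 : ℂ)‖)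
    (X : Set (EuclideanSpace ℂ (Fin n))) (hXne : X.Nonempty)
    (hXc : IsClosed X) (hXconv : Convex ℝ X) (h0X : (0 : EuclideanSpace ℂ (Fin n)) ∈ X)
    (P : EuclideanSpace ℂ (Fin n) → EuclideanSpace ℂ (Fin n))
    (hP : ∀ y, P y ∈ X ∧ ∀ z ∈ X, ‖y - P y‖ ≤ ‖y - z‖)
    (x : ℕ → EuclideanSpace ℂ (Fin n)) (hx1 : x 1 ∈ X)
    (hrec : ∀ k ≥ 1, x (k+1) =
      P (∑ j, ((b j : ℂ) * phase (inner ℂ (a j) (x k) : ℂ)) • a j)) :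
    (∀ k ≥ 2, ‖x k‖ ≤ ‖b‖) ∧
    Filter.Tendsto (fun k => ‖x (k+1) - x k‖) Filter.atTop (nhds 0) ∧
    (∀ (xstar : EuclideanSpace ℂ (Fin n)) (φ : ℕ → ℕ), StrictMono φ →
      Filter.Tendsto (fun k => x (φ k)) Filter.atTop (nhds xstar) →
      ∃ u : Fin N → ℂ, (∀ j, ‖u j‖ = 1) ∧
        (∀ j, (inner ℂ (a j) xstar : ℂ) ≠ 0 → u j = 1) ∧
        xstar = P (∑ j, ((b j : ℂ) * u j * phase (inner ℂ (a j) xstar : ℂ)) • a j)) := by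
  classical
  have hb0 : ∀ j, 0 ≤ b j := fun j => (hb j) ▸ norm_nonneg _
  have parseval : ∀ y : EuclideanSpace ℂ (Fin n),
      ∑ j, ‖(inner ℂ (a j) y : ℂ)‖^2 = ‖y‖^2 := by
    intro y
    have h1 : (inner ℂ y y : ℂ) = ∑ j, (inner ℂ (a j) y : ℂ) * (inner ℂ y (a j) : ℂ) := by
      calc (inner ℂ y y : ℂ) = inner ℂ y (∑ j, (inner ℂ (a j) y : ℂ) • a j) := by rw [hiso y]
      _ = ∑ j, (inner ℂ (a j) y : ℂ) * (inner ℂ y (a j) : ℂ) := by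
          rw [inner_sum]
          exact Finset.sum_congr rfl fun j _ => inner_smul_right _ _ _
    have h2 : ∀ j : Fin N, (inner ℂ (a j) y : ℂ) * (inner ℂ y (a j) : ℂ)
        = ((‖(inner ℂ (a j) y : ℂ)‖^2 : ℝ) : ℂ) := by
      intro j
      rw [← inner_conj_symm y (a j), Complex.mul_conj, Complex.sq_norm]
    have h3 : (inner ℂ y y : ℂ) = ((∑ j, ‖(inner ℂ (a j) y : ℂ)‖^2 : ℝ) : ℂ) := by
      rw [h1, Finset.sum_congr rfl fun j _ => h2 j]
      norm_cast
    have h4 := inner_self_eq_norm_sq_to_K (𝕜 := ℂ) y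
    have h5 : ((∑ j, ‖(inner ℂ (a j) y : ℂ)‖^2 : ℝ) : ℂ) = ((‖y‖^2 : ℝ) : ℂ) := by
      rw [← h3, h4]
      norm_cast
    exact_mod_cast h5
  have Abound : ∀ c : Fin N → ℂ, ‖∑ j, c j • a j‖ ≤ Real.sqrt (∑ j, ‖c j‖^2) := by
    intro c
    set y := ∑ j, c j • a j with hy
    have h1 : (inner ℂ y y : ℂ) = ∑ j, c j * (inner ℂ y (a j) : ℂ) := by
      calc (inner ℂ y y : ℂ) = inner ℂ y (∑ j, c j • a j) := by rw [← hy]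
      _ = ∑ j, c j * (inner ℂ y (a j) : ℂ) := by
          rw [inner_sum]
          exact Finset.sum_congr rfl fun j _ => inner_smul_right _ _ _
    have h2 : ‖y‖^2 = (∑ j, c j * (inner ℂ y (a j) : ℂ)).re := by
      rw [← h1, inner_self_eq_norm_sq_to_K]
      simp [← Complex.ofReal_pow]
    have h3 : (∑ j, c j * (inner ℂ y (a j) : ℂ)).re
        ≤ ∑ j, ‖c j‖ * ‖(inner ℂ (a j) y : ℂ)‖ := by
      calc (∑ j, c j * (inner ℂ y (a j) : ℂ)).re
          ≤ ‖(∑ j, c j * (inner ℂ y (a j) : ℂ))‖ := Complex.re_le_norm _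
      _ ≤ ∑ j, ‖(c j * (inner ℂ y (a j) : ℂ))‖ := norm_sum_le _ _
      _ = ∑ j, ‖c j‖ * ‖(inner ℂ (a j) y : ℂ)‖ := by
          apply Finset.sum_congr rfl
          intro j _
          rw [norm_mul, ← inner_conj_symm y (a j), Complex.norm_conj]
    have hnn : 0 ≤ ∑ j, ‖c j‖ * ‖(inner ℂ (a j) y : ℂ)‖ :=
      Finset.sum_nonneg fun j _ => mul_nonneg (norm_nonneg _) (norm_nonneg _)
    have h4 : ∑ j, ‖c j‖ * ‖(inner ℂ (a j) y : ℂ)‖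
        ≤ Real.sqrt (∑ j, ‖c j‖^2) * ‖y‖ := by
      have hcs := Finset.sum_mul_sq_le_sq_mul_sq Finset.univ
        (fun j => ‖c j‖) (fun j => ‖(inner ℂ (a j) y : ℂ)‖)
      calc ∑ j, ‖c j‖ * ‖(inner ℂ (a j) y : ℂ)‖
          = Real.sqrt ((∑ j, ‖c j‖ * ‖(inner ℂ (a j) y : ℂ)‖)^2) :=
            (Real.sqrt_sq hnn).symm
      _ ≤ Real.sqrt ((∑ j, ‖c j‖^2) * (∑ j, ‖(inner ℂ (a j) y : ℂ)‖^2)) :=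
            Real.sqrt_le_sqrt hcs
      _ = Real.sqrt (∑ j, ‖c j‖^2) * Real.sqrt (∑ j, ‖(inner ℂ (a j) y : ℂ)‖^2) :=
            Real.sqrt_mul (Finset.sum_nonneg fun j _ => sq_nonneg _) _
      _ = Real.sqrt (∑ j, ‖c j‖^2) * ‖y‖ := by
            rw [parseval y, Real.sqrt_sq (norm_nonneg _)]
    have h5 : ‖y‖^2 ≤ Real.sqrt (∑ j, ‖c j‖^2) * ‖y‖ :=
      h2 ▸ le_trans h3 h4
    rcases eq_or_lt_of_le (norm_nonneg y) with h0 | h0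
    · rw [← h0]; exact Real.sqrt_nonneg _
    · have h6 : ‖y‖ * ‖y‖ ≤ Real.sqrt (∑ j, ‖c j‖^2) * ‖y‖ := by nlinarith
      exact le_of_mul_le_mul_right h6 h0
  have Gexp : ∀ (z : EuclideanSpace ℂ (Fin n)) (w : Fin N → ℂ),
      (∑ j, ‖((inner ℂ (a j) z : ℂ) - (b j : ℂ) * w j)‖^2)
      = ‖z‖^2 + (∑ j, ‖((b j : ℂ) * w j)‖^2)
        - 2 * (inner ℂ z (∑ j, ((b j : ℂ) * w j) • a j) : ℂ).re := by
    intro z w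
    have hterm : ∀ j : Fin N, ‖((inner ℂ (a j) z : ℂ) - (b j : ℂ) * w j)‖^2
        = ‖(inner ℂ (a j) z : ℂ)‖^2 + ‖((b j : ℂ) * w j)‖^2
          - 2 * ((inner ℂ (a j) z : ℂ) * (starRingEnd ℂ) ((b j : ℂ) * w j)).re := by
      intro j
      rw [Complex.sq_norm, Complex.sq_norm, Complex.sq_norm, Complex.normSq_sub]
    have hinner : (inner ℂ z (∑ j, ((b j : ℂ) * w j) • a j) : ℂ).re
        = ∑ j, ((inner ℂ (a j) z : ℂ) * (starRingEnd ℂ) ((b j : ℂ) * w j)).re := by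
      rw [inner_sum, Complex.re_sum]
      apply Finset.sum_congr rfl
      intro j _
      rw [inner_smul_right, ← inner_conj_symm z (a j)]
      have aux : ∀ c α : ℂ, (c * (starRingEnd ℂ) α).re = (α * (starRingEnd ℂ) c).re := by
        intro c α
        simp only [Complex.mul_re, Complex.conj_re, Complex.conj_im]
        ring
      exact aux _ _
    calc (∑ j, ‖((inner ℂ (a j) z : ℂ) - (b j : ℂ) * w j)‖^2)
        = ∑ j, (‖(inner ℂ (a j) z : ℂ)‖^2 + ‖((b j : ℂ) * w j)‖^2
            - 2 * ((inner ℂ (a j) z : ℂ) * (starRingEnd ℂ) ((b j : ℂ) * w j)).re) :=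
          Finset.sum_congr rfl fun j _ => hterm j
    _ = (∑ j, ‖(inner ℂ (a j) z : ℂ)‖^2) + (∑ j, ‖((b j : ℂ) * w j)‖^2)
          - 2 * ∑ j, ((inner ℂ (a j) z : ℂ) * (starRingEnd ℂ) ((b j : ℂ) * w j)).re := by
        rw [Finset.sum_sub_distrib, Finset.sum_add_distrib, Finset.mul_sum]
    _ = ‖z‖^2 + (∑ j, ‖((b j : ℂ) * w j)‖^2)
          - 2 * (inner ℂ z (∑ j, ((b j : ℂ) * w j) • a j) : ℂ).re := by
        rw [parseval z, hinner]
  have Gdiff : ∀ (z z' : EuclideanSpace ℂ (Fin n)) (w : Fin N → ℂ),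
      (∑ j, ‖((inner ℂ (a j) z : ℂ) - (b j : ℂ) * w j)‖^2)
      - (∑ j, ‖((inner ℂ (a j) z' : ℂ) - (b j : ℂ) * w j)‖^2)
      = ‖z - (∑ j, ((b j : ℂ) * w j) • a j)‖^2 - ‖z' - (∑ j, ((b j : ℂ) * w j) • a j)‖^2 := by
    intro z z' w
    rw [Gexp z w, Gexp z' w, norm_sub_sq (𝕜 := ℂ), norm_sub_sq (𝕜 := ℂ)]
    simp only [RCLike.re_to_complex]
    ring
  -- membership of iterates
  have hxX : ∀ k, 1 ≤ k → x k ∈ X := by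
    intro k hk
    match k, hk with
    | 1, _ => exact hx1
    | (m+2), _ =>
      rw [hrec (m+1) (by omega)]
      exact (hP _).1
  -- the key descent inequality
  have key : ∀ k, 1 ≤ k →
      (∑ j, (‖(inner ℂ (a j) (x (k+1)) : ℂ)‖ - b j)^2) + ‖x (k+1) - x k‖^2
      ≤ ∑ j, (‖(inner ℂ (a j) (x k) : ℂ)‖ - b j)^2 := by
    intro k hk
    set w : Fin N → ℂ := fun j => phase (inner ℂ (a j) (x k) : ℂ) with hw
    set Y : EuclideanSpace ℂ (Fin n) := ∑ j, ((b j : ℂ) * w j) • a j with hY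
    have hrecY : x (k+1) = P Y := hrec k hk
    have step1 : (∑ j, (‖(inner ℂ (a j) (x k) : ℂ)‖ - b j)^2)
        = ∑ j, ‖((inner ℂ (a j) (x k) : ℂ) - (b j : ℂ) * w j)‖^2 := by
      apply Finset.sum_congr rfl
      intro j _
      rw [hw]
      rw [sub_phase_abs (inner ℂ (a j) (x k) : ℂ) (b j), sq_abs]
    have step2 : (∑ j, (‖(inner ℂ (a j) (x (k+1)) : ℂ)‖ - b j)^2)
        ≤ ∑ j, ‖((inner ℂ (a j) (x (k+1)) : ℂ) - (b j : ℂ) * w j)‖^2 := by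
      apply Finset.sum_le_sum
      intro j _
      exact abs_sub_le_of_unimodular _ _ _ (hb0 j) (phase_abs _)
    have step3 : ‖P Y - Y‖^2 + ‖x k - P Y‖^2 ≤ ‖x k - Y‖^2 :=
      proj_three_point hXconv hP Y (hxX k hk)
    have step4 : (∑ j, ‖((inner ℂ (a j) (x (k+1)) : ℂ) - (b j : ℂ) * w j)‖^2)
        - (∑ j, ‖((inner ℂ (a j) (x k) : ℂ) - (b j : ℂ) * w j)‖^2)
        = ‖x (k+1) - Y‖^2 - ‖x k - Y‖^2 := Gdiff (x (k+1)) (x k) w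
    rw [hrecY] at step2 step4 ⊢
    have hnorm : ‖P Y - x k‖ = ‖x k - P Y‖ := norm_sub_rev _ _
    rw [hnorm]
    linarith [step1, step2, step3, step4]
  -- part (i)
  have part1 : ∀ k ≥ 2, ‖x k‖ ≤ ‖b‖ := by
    intro k hk
    obtain ⟨m, rfl⟩ : ∃ m, k = m + 1 := ⟨k - 1, by omega⟩
    have hm : 1 ≤ m := by omega
    rw [hrec m hm]
    have h1 : ‖P (∑ j, ((b j : ℂ) * phase (inner ℂ (a j) (x m) : ℂ)) • a j)‖
        ≤ ‖∑ j, ((b j : ℂ) * phase (inner ℂ (a j) (x m) : ℂ)) • a j‖ :=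
      proj_norm_le hXconv hP h0X _
    have h2 : ‖∑ j, ((b j : ℂ) * phase (inner ℂ (a j) (x m) : ℂ)) • a j‖
        ≤ Real.sqrt (∑ j, ‖((b j : ℂ) * phase (inner ℂ (a j) (x m) : ℂ))‖^2) :=
      Abound _
    have h3 : (∑ j, ‖((b j : ℂ) * phase (inner ℂ (a j) (x m) : ℂ))‖^2)
        = ∑ j, (b j)^2 := by
      apply Finset.sum_congr rfl
      intro j _
      rw [norm_mul, Complex.norm_real, Real.norm_of_nonneg (hb0 j), phase_abs, mul_one]
    have h4 : ‖b‖ = Real.sqrt (∑ j, (b j)^2) := by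
      rw [EuclideanSpace.norm_eq]
      congr 1
      exact Finset.sum_congr rfl fun j _ => by rw [Real.norm_eq_abs, sq_abs]
    rw [h4]
    rw [h3] at h2
    exact le_trans h1 h2
  -- part (ii)
  have part2 : Filter.Tendsto (fun k => ‖x (k+1) - x k‖) Filter.atTop (nhds 0) := by
    set d : ℕ → ℝ := fun m => ∑ j, (‖(inner ℂ (a j) (x (m+1)) : ℂ)‖ - b j)^2 with hd
    have hdanti : Antitone d := by
      apply antitone_nat_of_succ_le
      intro m
      have := key (m+1) (by omega)
      have hsq : (0:ℝ) ≤ ‖x (m+2) - x (m+1)‖^2 := sq_nonneg _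
      simp only [hd]
      linarith
    have hdbdd : BddBelow (Set.range d) := by
      refine ⟨0, ?_⟩
      rintro r ⟨m, rfl⟩
      exact Finset.sum_nonneg fun j _ => sq_nonneg _
    have hL := tendsto_atTop_ciInf hdanti hdbdd
    have hL2 : Filter.Tendsto (fun m => d (m+1)) Filter.atTop (nhds (⨅ i, d i)) :=
      (Filter.tendsto_add_atTop_iff_nat 1).mpr hL
    have hdiff : Filter.Tendsto (fun m => d m - d (m+1)) Filter.atTop (nhds 0) := by
      have := hL.sub hL2
      simpa using this
    have hsq : Filter.Tendsto (fun m => ‖x (m+2) - x (m+1)‖^2) Filter.atTop (nhds 0) := by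
      apply squeeze_zero (fun m => sq_nonneg _) _ hdiff
      intro m
      have := key (m+1) (by omega)
      simp only [hd]
      linarith
    have hnorm : Filter.Tendsto (fun m => ‖x (m+2) - x (m+1)‖) Filter.atTop (nhds 0) := by
      have h := (Real.continuous_sqrt.tendsto 0).comp hsq
      have heq : (fun m => Real.sqrt (‖x (m+2) - x (m+1)‖^2))
          = fun m => ‖x (m+2) - x (m+1)‖ :=
        funext fun m => Real.sqrt_sq (norm_nonneg _)
      rw [Real.sqrt_zero] at h
      rw [← heq]
      exact h
    exact (Filter.tendsto_add_atTop_iff_nat 1).mp hnorm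
  refine ⟨part1, part2, ?_⟩
  -- part (iii)
  intro xstar φ hφ hconv
  have hgS : ∀ k, (fun j => phase (inner ℂ (a j) (x (φ k)) : ℂ))
      ∈ Set.univ.pi (fun _ : Fin N => Metric.sphere (0:ℂ) 1) := by
    intro k j _
    simp only [Metric.mem_sphere, dist_zero_right]
    exact phase_abs _
  obtain ⟨v, hvS, ψ, hψ, hgv⟩ :=
    (isCompact_univ_pi fun _ : Fin N => isCompact_sphere (0:ℂ) 1).tendsto_subseq hgS
  have hvabs : ∀ j, ‖v j‖ = 1 := by
    intro j
    have := hvS j (Set.mem_univ j)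
    simpa using this
  have hconv2 : Filter.Tendsto (fun k => x (φ (ψ k))) Filter.atTop (nhds xstar) :=
    hconv.comp hψ.tendsto_atTop
  have hinner : ∀ j, Filter.Tendsto (fun k => (inner ℂ (a j) (x (φ (ψ k))) : ℂ))
      Filter.atTop (nhds (inner ℂ (a j) xstar : ℂ)) :=
    fun j => Filter.Tendsto.inner tendsto_const_nhds hconv2
  have hcoord : ∀ j, Filter.Tendsto (fun k => phase (inner ℂ (a j) (x (φ (ψ k))) : ℂ))
      Filter.atTop (nhds (v j)) := by
    intro j
    have := (tendsto_pi_nhds.mp hgv) j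
    exact this
  set u : Fin N → ℂ := fun j => if (inner ℂ (a j) xstar : ℂ) = 0 then v j else 1 with hu
  refine ⟨u, ?_, ?_, ?_⟩
  · intro j
    by_cases h : (inner ℂ (a j) xstar : ℂ) = 0
    · rw [hu]; simp only [if_pos h]; exact hvabs j
    · rw [hu]; simp only [if_neg h]; exact norm_one
  · intro j hj
    rw [hu]; simp only [if_neg hj]
  · have hvp : ∀ j, v j = u j * phase (inner ℂ (a j) xstar : ℂ) := by
      intro j
      by_cases h : (inner ℂ (a j) xstar : ℂ) = 0
      · have hp0 : phase 0 = 1 := by simp [phase]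
        rw [hu]
        simp only [if_pos h, h, hp0, mul_one, if_true]
      · have h1 : Filter.Tendsto (fun k => phase (inner ℂ (a j) (x (φ (ψ k))) : ℂ))
            Filter.atTop (nhds (phase (inner ℂ (a j) xstar : ℂ))) :=
          (phase_continuousAt h).tendsto.comp (hinner j)
        have h2 : v j = phase (inner ℂ (a j) xstar : ℂ) :=
          tendsto_nhds_unique (hcoord j) h1
        rw [hu]
        simp only [if_neg h, one_mul]
        exact h2
    have hytend : Filter.Tendsto
        (fun k => ∑ j, ((b j : ℂ) * phase (inner ℂ (a j) (x (φ (ψ k))) : ℂ)) • a j)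
        Filter.atTop
        (nhds (∑ j, ((b j : ℂ) * u j * phase (inner ℂ (a j) xstar : ℂ)) • a j)) := by
      apply tendsto_finset_sum
      intro j _
      have h1 : Filter.Tendsto (fun k => (b j : ℂ) * phase (inner ℂ (a j) (x (φ (ψ k))) : ℂ))
          Filter.atTop (nhds ((b j : ℂ) * v j)) :=
        tendsto_const_nhds.mul (hcoord j)
      have h2 := h1.smul_const (a j)
      have h3 : (b j : ℂ) * v j = (b j : ℂ) * u j * phase (inner ℂ (a j) xstar : ℂ) := by
        rw [hvp j]; ring
      rw [h3] at h2
      exact h2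
    have hlip : LipschitzWith 1 P := by
      apply LipschitzWith.of_dist_le_mul
      intro y y'
      simpa [dist_eq_norm, one_mul] using proj_nonexpansive hXconv hP y y'
    have hxsucc : Filter.Tendsto (fun k => x (φ (ψ k) + 1)) Filter.atTop
        (nhds (P (∑ j, ((b j : ℂ) * u j * phase (inner ℂ (a j) xstar : ℂ)) • a j))) := by
      have h1 := (hlip.continuous.tendsto _).comp hytend
      apply h1.congr'
      filter_upwards [Filter.eventually_ge_atTop 1] with k hk
      have hk1 : 1 ≤ φ (ψ k) := le_trans hk (le_trans hψ.le_apply hφ.le_apply)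
      exact (hrec (φ (ψ k)) hk1).symm
    have hdiff0 : Filter.Tendsto (fun k => x (φ (ψ k) + 1) - x (φ (ψ k)))
        Filter.atTop (nhds 0) := by
      rw [tendsto_zero_iff_norm_tendsto_zero]
      exact part2.comp ((hφ.comp hψ).tendsto_atTop)
    have hxsucc2 : Filter.Tendsto (fun k => x (φ (ψ k) + 1)) Filter.atTop (nhds xstar) := by
      have := hdiff0.add hconv2
      simp only [zero_add] at this
      apply this.congr
      intro k
      abel
    exact tendsto_nhds_unique hxsucc2 hxsucc
end

section
/- Let A ∈ ℂ^{n×N} satisfy A A^* = I_n, let b ∈ ℝ^N be entrywise nonnegative, and let X ⊆ ℂ^n be a nonempty closed convex set containing 0, with nearest-point projection P_X. Suppose x_* ∈ X is a fixed point of AP, i.e. there exists u ∈ ℂ^N with |u_j| = 1 for all j and u_j = 1 whenever (A^* x_*)_j ≠ 0 such that x_* = P_X(A(b ⊙ u ⊙ phase(A^* x_*))). Then ‖x_*‖ ≤ ‖b‖; if ‖x_*‖ = ‖b‖ then |A^* x_*| = b (entrywise), i.e. x_* is a phase-retrieval solution; and conversely, if |A^* x_*| ≠ b then ‖x_*‖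 < ‖b‖. -/
private lemma conj_phase_mul (z : ℂ) (h : z ≠ 0) :
    (starRingEnd ℂ) (phase z) * z = ‖z‖ := by
  unfold phase
  rw [if_neg h, map_div₀, Complex.conj_ofReal, div_mul_eq_mul_div]
  rw [show (starRingEnd ℂ) z * z = ((‖z‖ : ℝ) : ℂ)^2 by
    rw [← Complex.normSq_eq_conj_mul_self]; rw [Complex.normSq_eq_norm_sq]; push_cast; ring]
  have : (‖z‖ : ℂ) ≠ 0 := by simpa using (norm_ne_zero_iff.mpr h)
  field_simp

set_option maxHeartbeats 1000000 in
/-- norm criterion for fixed points of AP. If `A A^*= I` (Parseval frame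
condition on the columns `a j` of `A`), `b` is entrywise nonnegative, `X` is a nonempty
closed convex set containing `0` with nearest-point projection `P`, and `x_* ∈ X` is a
fixed point of AP (witnessed by `u`), then `‖x_*‖ ≤ ‖b‖`; if `‖x_*‖ = ‖b‖` then
`|A^* x_*| = b` entrywise; and if `|A^* x_*| ≠ b` then `‖x_*‖ < ‖b‖`. -/
theorem AP_fixed_point_norm_criterion {n N : ℕ}
    (a : Fin N → EuclideanSpace ℂ (Fin n))
    (hiso : ∀ x : EuclideanSpace ℂ (Fin n), ∑ j, (inner ℂ (a j) x : ℂ) • a j = x)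
    (b : EuclideanSpace ℝ (Fin N)) (hbpos : ∀ j, 0 ≤ b j)
    (X : Set (EuclideanSpace ℂ (Fin n))) (hXne : X.Nonempty)
    (hXc : IsClosed X) (hXconv : Convex ℝ X) (h0X : (0 : EuclideanSpace ℂ (Fin n)) ∈ X)
    (P : EuclideanSpace ℂ (Fin n) → EuclideanSpace ℂ (Fin n))
    (hP : ∀ y, P y ∈ X ∧ ∀ z ∈ X, ‖y - P y‖ ≤ ‖y - z‖)
    (xstar : EuclideanSpace ℂ (Fin n)) (hxX : xstar ∈ X)
    (u : Fin N → ℂ) (hu1 : ∀ j, ‖u j‖ = 1)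
    (hu2 : ∀ j, (inner ℂ (a j) xstar : ℂ) ≠ 0 → u j = 1)
    (hfix : xstar = P (∑ j, ((b j : ℂ) * u j * phase (inner ℂ (a j) xstar : ℂ)) • a j)) :
    ‖xstar‖ ≤ ‖b‖ ∧
    (‖xstar‖ = ‖b‖ → ∀ j, ‖(inner ℂ (a j) xstar : ℂ)‖ = b j) ∧
    ((¬ ∀ j, ‖(inner ℂ (a j) xstar : ℂ)‖ = b j) → ‖xstar‖ < ‖b‖) := by
  classical
  set c : Fin N → ℂ := fun j => (inner ℂ (a j) xstar : ℂ) with hc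
  set y : EuclideanSpace ℂ (Fin n) :=
    ∑ j, ((b j : ℂ) * u j * phase (c j)) • a j with hy
  set S : ℝ := ∑ j, b j * ‖c j‖ with hS
  -- Step A : inner ℂ y xstar = S
  have stepA : (inner ℂ y xstar : ℂ) = (S : ℂ) := by
    rw [hy, sum_inner]
    have hterm : ∀ j, (inner ℂ (((b j : ℂ) * u j * phase (c j)) • a j) xstar : ℂ)
        = ((b j * ‖c j‖ : ℝ) : ℂ) := by
      intro j
      rw [inner_smul_left]
      have hcj : (inner ℂ (a j) xstar : ℂ) = c j := rfl
      rw [hcj]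
      by_cases hj : c j = 0
      · simp [hj]
      · rw [hu2 j hj]
        rw [show ((starRingEnd ℂ) ((b j : ℂ) * 1 * phase (c j))) * c j
            = (b j : ℂ) * ((starRingEnd ℂ) (phase (c j)) * c j) by
          rw [map_mul, map_mul, Complex.conj_ofReal, map_one]; push_cast; ring]
        rw [conj_phase_mul _ hj]
        push_cast; ring
    rw [Finset.sum_congr rfl (fun j _ => hterm j), hS]
    push_cast; ring
  -- Step B : ‖xstar‖^2 = ∑ |c j|^2
  have stepB : ‖xstar‖ ^ 2 = ∑ j, (‖c j‖) ^ 2 := by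
    have hx : xstar = ∑ j, c j • a j := (hiso xstar).symm
    have h1 : (inner ℂ xstar xstar : ℂ) = ∑ j, ((‖c j‖ : ℝ) : ℂ) ^ 2 := by
      calc (inner ℂ xstar xstar : ℂ) = (inner ℂ (∑ j, c j • a j) xstar : ℂ) := by rw [← hx]
        _ = ∑ j, ((‖c j‖ : ℝ) : ℂ) ^ 2 := by
            rw [sum_inner]
            refine Finset.sum_congr rfl fun j _ => ?_
            rw [inner_smul_left]
            have hcj : (inner ℂ (a j) xstar : ℂ) = c j := rfl
            rw [hcj, ← Complex.normSq_eq_conj_mul_self, Complex.normSq_eq_norm_sq]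
            push_cast; ring
    rw [inner_self_eq_norm_sq_to_K] at h1
    have h2 : ((‖xstar‖ ^ 2 : ℝ) : ℂ) = ((∑ j, (‖c j‖) ^ 2 : ℝ) : ℂ) := by
      push_cast
      exact h1
    exact_mod_cast h2
  -- Step C : projection inequality : ‖xstar‖^2 ≤ re ⟪y, xstar⟫
  have stepC : ‖xstar‖ ^ 2 ≤ (inner ℂ y xstar : ℂ).re := by
    set r : ℝ := (inner ℂ (y - xstar) xstar : ℂ).re with hr
    have key : ∀ t : ℝ, 0 < t → t ≤ 1 → 0 ≤ 2 * r + t * ‖xstar‖ ^ 2 := by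
      intro t ht ht1
      have hz : (1 - t) • xstar ∈ X := by
        have := hXconv hxX h0X (by linarith : (0:ℝ) ≤ 1 - t) ht.le (by ring)
        simpa using this
      have hle : ‖y - xstar‖ ≤ ‖y - (1 - t) • xstar‖ := by
        have h2 := (hP y).2 _ hz
        rwa [← hfix] at h2
      have hsub : y - (1 - t) • xstar = (y - xstar) + (t : ℂ) • xstar := by
        have hts : (t : ℂ) • xstar = t • xstar :=
          (RCLike.real_smul_eq_coe_smul (K := ℂ) t xstar).symm
        rw [hts]
        module
      have hsq : ‖y - xstar‖ ^ 2 ≤ ‖y - (1 - t) • xstar‖ ^ 2 := by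
        nlinarith [norm_nonneg (y - xstar), norm_nonneg (y - (1-t) • xstar), hle]
      rw [hsub, @norm_add_sq ℂ _ _ _ _ (y - xstar) ((t:ℂ) • xstar)] at hsq
      rw [inner_smul_right, norm_smul] at hsq
      have hre : RCLike.re ((t:ℂ) * (inner ℂ (y - xstar) xstar : ℂ)) = t * r := by
        rw [hr]
        simp [Complex.mul_re]
      rw [hre] at hsq
      have habs : ‖(t:ℂ)‖ = t := by
        rw [Complex.norm_real, Real.norm_eq_abs, abs_of_pos ht]
      rw [habs] at hsq
      have h3 : 0 ≤ 2 * (t * r) + (t * ‖xstar‖) ^ 2 := by nlinarith [hsq]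
      nlinarith [h3, ht]
    have hr0 : 0 ≤ r := by
      by_contra hneg
      push_neg at hneg
      have hx1 : (0:ℝ) < ‖xstar‖ ^ 2 + 1 := by positivity
      set t : ℝ := min 1 ((-2 * r) / (‖xstar‖ ^ 2 + 1)) with htdef
      have ht : 0 < t := lt_min one_pos (div_pos (by linarith) hx1)
      have ht1 : t ≤ 1 := min_le_left _ _
      have h2 := key t ht ht1
      have htle : t * (‖xstar‖ ^ 2 + 1) ≤ -2 * r := by
        have hmin : t ≤ (-2 * r) / (‖xstar‖ ^ 2 + 1) := min_le_right _ _
        calc t * (‖xstar‖ ^ 2 + 1)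
            ≤ ((-2 * r) / (‖xstar‖ ^ 2 + 1)) * (‖xstar‖ ^ 2 + 1) :=
              mul_le_mul_of_nonneg_right hmin hx1.le
          _ = -2 * r := by field_simp
      nlinarith [h2, htle, ht]
    have hsplit : (inner ℂ (y - xstar) xstar : ℂ).re
        = (inner ℂ y xstar : ℂ).re - ‖xstar‖ ^ 2 := by
      rw [inner_sub_left, Complex.sub_re]
      have hxx : (inner ℂ xstar xstar : ℂ).re = ‖xstar‖ ^ 2 :=
        inner_self_eq_norm_sq (𝕜 := ℂ) xstar
      rw [hxx]
    rw [hr, hsplit] at hr0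
    linarith
  -- combine : ‖xstar‖^2 ≤ S
  have hxS : ‖xstar‖ ^ 2 ≤ S := by
    rw [stepA] at stepC
    simpa using stepC
  -- Cauchy-Schwarz
  set cabs : EuclideanSpace ℝ (Fin N) := WithLp.toLp 2 (fun j => ‖c j‖) with hcabs
  have hinner : (inner ℝ b cabs : ℝ) = S := by
    rw [hS]
    simp [hcabs, PiLp.inner_apply, RCLike.inner_apply, conj_trivial, mul_comm]
  have hnormc : ‖cabs‖ = ‖xstar‖ := by
    have h1 : ‖cabs‖ ^ 2 = ∑ j, (‖c j‖) ^ 2 := by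
      rw [← real_inner_self_eq_norm_sq]
      rw [hcabs, PiLp.inner_apply]; simp [RCLike.inner_apply, conj_trivial, sq]
    have h2 : ‖cabs‖ ^ 2 = ‖xstar‖ ^ 2 := by rw [h1, ← stepB]
    exact (sq_eq_sq₀ (norm_nonneg cabs) (norm_nonneg xstar)).mp h2
  have hCS : S ≤ ‖b‖ * ‖xstar‖ := by
    rw [← hinner, ← hnormc]
    exact real_inner_le_norm b cabs
  -- first claim
  have claim1 : ‖xstar‖ ≤ ‖b‖ := by
    rcases eq_or_lt_of_le (norm_nonneg xstar) with h0 | h0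
    · rw [← h0]; exact norm_nonneg b
    · have hmul := le_trans hxS hCS
      rw [sq] at hmul
      exact le_of_mul_le_mul_right hmul h0
  -- second claim
  have claim2 : ‖xstar‖ = ‖b‖ → ∀ j, ‖c j‖ = b j := by
    intro heq j
    by_cases hb0 : ‖b‖ = 0
    · have hbz : b = 0 := norm_eq_zero.mp hb0
      have hxz : xstar = 0 := norm_eq_zero.mp (by rw [heq, hb0])
      have hcz : c j = 0 := by
        rw [hc]
        simp only [hxz, inner_zero_right]
      rw [hcz, hbz]
      simp
    · have hSeq : (inner ℝ b cabs : ℝ) = ‖b‖ * ‖cabs‖ := by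
        rw [hinner, hnormc, heq]
        have h1 : ‖b‖ ^ 2 ≤ S := by rw [← heq]; exact hxS
        have h2 : S ≤ ‖b‖ * ‖b‖ := by rw [heq] at hCS; exact hCS
        nlinarith [h1, h2]
      have hprop := inner_eq_norm_mul_iff_real.mp hSeq
      have hj := congrFun (congrArg (fun (v : EuclideanSpace ℝ (Fin N)) => (v : Fin N → ℝ)) hprop) j
      simp only [PiLp.smul_apply, smul_eq_mul] at hj
      rw [hnormc, heq] at hj
      have hcabsj : cabs j = ‖c j‖ := rfl
      rw [hcabsj] at hj
      exact (mul_left_cancel₀ hb0 hj).symm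
  exact ⟨claim1, claim2, fun hne => lt_of_le_of_ne claim1 (fun h => hne (claim2 h))⟩
end

section
/- Let A ∈ ℂ^{n×N} with columns a_1,…,a_N satisfy A A^* = I_n, let x0 ∈ ℂ^n, b_j = |a_j^* x0|, J = {j : b_j > 0}, and F(x) = (1/2) Σ_{j=1}^N (|a_j^* x| − b_j)². Suppose x ∈ ℂ^n satisfies a_j^* x ≠ 0 for all j ∈ J. Then for every ζ ∈ ℂ^n the real directional derivative of F at x along ζ equals Re(x^* ζ) − Σ_{j∈J} b_j · Re( conj(phase(a_j^* x)) · (a_j^* ζ) ), i.e. d/dt F(x + tζ)|_{t=0} = ⟨x, ζ⟩_ℝ − Σ_{j∈J} b_j Re((B_x^* ζ)_j). -/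
lemma hasDerivAt_normSq_line (c d : ℂ) :
    HasDerivAt (fun t : ℝ => Complex.normSq (c + t * d))
      (2 * ((starRingEnd ℂ) c * d).re) 0 := by
  have h : (fun t : ℝ => Complex.normSq (c + t * d)) =
      fun t : ℝ => Complex.normSq c + t * (2 * ((starRingEnd ℂ) c * d).re)
        + t ^ 2 * Complex.normSq d := by
    funext t; simp [Complex.normSq_apply, Complex.mul_re]; ring
  rw [h]
  have h1 : HasDerivAt (fun t : ℝ => Complex.normSq c + t * (2 * ((starRingEnd ℂ) c * d).re))
      (2 * ((starRingEnd ℂ) c * d).re) 0 := by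
    simpa using ((hasDerivAt_id (0:ℝ)).mul_const (2 * ((starRingEnd ℂ) c * d).re)).const_add
      (Complex.normSq c)
  have h2 : HasDerivAt (fun t : ℝ => t ^ 2 * Complex.normSq d) (0 : ℝ) 0 := by
    simpa using (hasDerivAt_pow 2 (0:ℝ)).mul_const (Complex.normSq d)
  exact (h1.add h2).congr_deriv (add_zero _)

lemma hasDerivAt_abs_line (c d : ℂ) (hc : c ≠ 0) :
    HasDerivAt (fun t : ℝ => ‖c + t * d‖)
      (((starRingEnd ℂ) (phase c) * d).re) 0 := by
  have hq := hasDerivAt_normSq_line c d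
  have hne : Complex.normSq (c + (0:ℝ) * d) ≠ 0 := by
    simpa using Complex.normSq_pos.mpr hc |>.ne'
  have hs := (Real.hasDerivAt_sqrt hne).comp 0 hq
  have habs : (fun t : ℝ => ‖c + t * d‖) =
      (Real.sqrt ∘ fun t : ℝ => Complex.normSq (c + t * d)) := by
    funext t; simp [Complex.norm_def, Function.comp]
  rw [habs]
  refine hs.congr_deriv ?_
  symm
  have h0 : Complex.normSq (c + (0:ℝ) * d) = Complex.normSq c := by simp
  rw [h0]
  have habsc : Real.sqrt (Complex.normSq c) = ‖c‖ := (Complex.norm_def c).symm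
  have hac : (‖c‖ : ℝ) ≠ 0 := norm_ne_zero_iff.mpr hc
  rw [habsc]
  unfold phase
  rw [if_neg hc, map_div₀, Complex.conj_ofReal, div_mul_eq_mul_div, Complex.div_re]
  simp only [Complex.normSq_ofReal, Complex.ofReal_re, Complex.ofReal_im]
  field_simp
  ring

/-- first directional derivative of the phase-retrieval objective `F`.
For isometric `A^*` (Parseval frame condition on the columns `a j` of `A`) and a point
`x` with `a_j^* x ≠ 0` for all `j ∈ J`, the real directional derivative of `F` at `x`
along `ζ` is `Re(x^* ζ) - Σ_{j ∈ J} b j · Re(conj(phase(a_j^* x)) · (a_j^* ζ))`. -/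
theorem AP_first_derivative {n N : ℕ} (a : Fin N → EuclideanSpace ℂ (Fin n))
    (hiso : ∀ x : EuclideanSpace ℂ (Fin n), ∑ j, (inner ℂ (a j) x : ℂ) • a j = x)
    (x0 : EuclideanSpace ℂ (Fin n))
    (b : Fin N → ℝ) (hb : ∀ j, b j = ‖(inner ℂ (a j) x0 : ℂ)‖)
    (J : Finset (Fin N)) (hJ : ∀ j, j ∈ J ↔ 0 < b j)
    (F : EuclideanSpace ℂ (Fin n) → ℝ)
    (hF : ∀ x, F x = (1/2) * ∑ j, (‖(inner ℂ (a j) x : ℂ)‖ - b j)^2)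
    (x : EuclideanSpace ℂ (Fin n)) (hx : ∀ j ∈ J, (inner ℂ (a j) x : ℂ) ≠ 0)
    (ζ : EuclideanSpace ℂ (Fin n)) :
    HasDerivAt (fun t : ℝ => F (x + t • ζ))
      ((inner ℂ x ζ : ℂ).re -
        ∑ j ∈ J, b j * ((starRingEnd ℂ) (phase (inner ℂ (a j) x : ℂ)) *
          (inner ℂ (a j) ζ : ℂ)).re) 0 := by
  set c : Fin N → ℂ := fun j => inner ℂ (a j) x with hc
  set d : Fin N → ℂ := fun j => inner ℂ (a j) ζ with hd
  have hb0 : ∀ j, 0 ≤ b j := fun j => (hb j) ▸ norm_nonneg _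
  have hbz : ∀ j ∉ J, b j = 0 := fun j hj =>
    le_antisymm (not_lt.mp (fun h => hj ((hJ j).mpr h))) (hb0 j)
  -- the inner product along the line
  have hline : ∀ (t : ℝ) (j : Fin N), (inner ℂ (a j) (x + t • ζ) : ℂ) = c j + t * d j := by
    intro t j
    rw [inner_add_right, ← Complex.coe_smul, inner_smul_right]
  -- per-term derivatives
  have hterm : ∀ j : Fin N, HasDerivAt
      (fun t : ℝ => (‖c j + t * d j‖ - b j)^2)
      (2 * ((starRingEnd ℂ) (c j) * d j).re
        - 2 * b j * ((starRingEnd ℂ) (phase (c j)) * d j).re) 0 := by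
    intro j
    by_cases hjJ : j ∈ J
    · have hcj : c j ≠ 0 := hx j hjJ
      have h1 := hasDerivAt_normSq_line (c j) (d j)
      have h2 := hasDerivAt_abs_line (c j) (d j) hcj
      have heq : (fun t : ℝ => (‖c j + t * d j‖ - b j)^2) =
          fun t : ℝ => Complex.normSq (c j + t * d j)
            - 2 * b j * ‖c j + t * d j‖ + (b j)^2 := by
        funext t
        rw [← Complex.sq_norm]
        ring
      rw [heq]
      have := ((h1.sub ((h2.const_mul (2 * b j)))).add_const ((b j)^2))
      exact this
    · have hbj : b j = 0 := hbz j hjJ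
      have heq : (fun t : ℝ => (‖c j + t * d j‖ - b j)^2) =
          fun t : ℝ => Complex.normSq (c j + t * d j) := by
        funext t
        rw [hbj, sub_zero, Complex.sq_norm]
      rw [heq, hbj]
      simpa using hasDerivAt_normSq_line (c j) (d j)
  -- sum
  have hsum : HasDerivAt
      (fun t : ℝ => (1/2 : ℝ) * ∑ j, (‖c j + t * d j‖ - b j)^2)
      ((1/2) * ∑ j, (2 * ((starRingEnd ℂ) (c j) * d j).re
        - 2 * b j * ((starRingEnd ℂ) (phase (c j)) * d j).re)) 0 := by
    have := HasDerivAt.sum (u := Finset.univ)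
      (fun j _ => hterm j)
    simpa using this.const_mul (1/2 : ℝ)
  have hfun : (fun t : ℝ => F (x + t • ζ)) =
      fun t : ℝ => (1/2 : ℝ) * ∑ j, (‖c j + t * d j‖ - b j)^2 := by
    funext t
    rw [hF]
    congr 1
    apply Finset.sum_congr rfl
    intro j _
    rw [hline]
  rw [hfun]
  -- compute the derivative value
  have hval : (1/2 : ℝ) * ∑ j, (2 * ((starRingEnd ℂ) (c j) * d j).re
        - 2 * b j * ((starRingEnd ℂ) (phase (c j)) * d j).re)
      = (inner ℂ x ζ : ℂ).re -
        ∑ j ∈ J, b j * ((starRingEnd ℂ) (phase (c j)) * d j).re := by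
    rw [Finset.sum_sub_distrib]
    have h1 : ∑ j, 2 * ((starRingEnd ℂ) (c j) * d j).re = 2 * (inner ℂ x ζ : ℂ).re := by
      have hz : (inner ℂ x ζ : ℂ) = ∑ j, (starRingEnd ℂ) (c j) * d j := by
        conv_lhs => rw [← hiso ζ]
        rw [inner_sum]
        apply Finset.sum_congr rfl
        intro j _
        rw [inner_smul_right, ← inner_conj_symm x (a j)]
        ring
      rw [hz, Complex.re_sum, Finset.mul_sum]
    have h2 : ∑ j, 2 * b j * ((starRingEnd ℂ) (phase (c j)) * d j).re
        = 2 * ∑ j ∈ J, b j * ((starRingEnd ℂ) (phase (c j)) * d j).re := by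
      rw [Finset.mul_sum]
      rw [← Finset.sum_subset (Finset.subset_univ J)]
      · apply Finset.sum_congr rfl; intro j _; ring
      · intro j _ hj
        rw [hbz j hj]; ring
    rw [h1, h2]
    ring
  rw [← hval]
  exact hsum
end

section
/- Let A ∈ ℂ^{n×N} with columns a_1,…,a_N satisfy A A^* = I_n, let x0 ∈ ℂ^n, b_j = |a_j^* x0|, J = {j : b_j > 0}, and F(x) = (1/2) Σ_{j=1}^N (|a_j^* x| − b_j)². Suppose x ∈ ℂ^n satisfies a_j^* x ≠ 0 for all j ∈ J. Then for every ζ ∈ ℂ^n the second derivative of t ↦ F(x + tζ) at t = 0 equals ‖ζ‖² − Σ_{j∈J} (b_j / |a_j^* x|) · ( Im( conj(phase(a_j^* x)) · (a_j^* ζ) ) )². -/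
namespace APaux

noncomputable def Pfun (c d : ℂ) (t : ℝ) : ℝ := Complex.normSq (c + t * d)

lemma Pfun_eq (c d : ℂ) (t : ℝ) :
    Pfun c d t = Complex.normSq c + 2 * ((starRingEnd ℂ) c * d).re * t
      + Complex.normSq d * t ^ 2 := by
  simp [Pfun, Complex.normSq_apply, Complex.add_re, Complex.add_im, Complex.mul_re,
    Complex.mul_im, Complex.conj_re, Complex.conj_im]
  ring

lemma Pfun_nonneg (c d : ℂ) (t : ℝ) : 0 ≤ Pfun c d t := Complex.normSq_nonneg _

lemma Pfun_zero (c d : ℂ) : Pfun c d 0 = Complex.normSq c := by simp [Pfun]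

lemma Pfun_cont (c d : ℂ) : Continuous (Pfun c d) := by
  have : Pfun c d = fun t => Complex.normSq c + 2 * ((starRingEnd ℂ) c * d).re * t
      + Complex.normSq d * t ^ 2 := funext (Pfun_eq c d)
  rw [this]; continuity

lemma Pfun_hasDerivAt (c d : ℂ) (t : ℝ) :
    HasDerivAt (Pfun c d)
      (2 * ((starRingEnd ℂ) c * d).re + 2 * Complex.normSq d * t) t := by
  have h : Pfun c d = fun t => Complex.normSq c + 2 * ((starRingEnd ℂ) c * d).re * t
      + Complex.normSq d * t ^ 2 := funext (Pfun_eq c d)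
  rw [h]
  have h1 := (((hasDerivAt_id t).const_mul (2 * ((starRingEnd ℂ) c * d).re)).const_add
      (Complex.normSq c)).add ((hasDerivAt_pow 2 t).const_mul (Complex.normSq d))
  refine h1.congr_deriv ?_
  simp; ring

lemma sqrtP_hasDerivAt (c d : ℂ) (t : ℝ) (h : Pfun c d t ≠ 0) :
    HasDerivAt (fun s => Real.sqrt (Pfun c d s))
      ((2 * ((starRingEnd ℂ) c * d).re + 2 * Complex.normSq d * t)
        / (2 * Real.sqrt (Pfun c d t))) t := by
  have h1 := (Real.hasDerivAt_sqrt h).comp t (Pfun_hasDerivAt c d t)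
  refine h1.congr_deriv ?_
  ring

lemma ratio_hasDerivAt (c d : ℂ) (hc : c ≠ 0) :
    HasDerivAt (fun t : ℝ => (((starRingEnd ℂ) c * d).re + Complex.normSq d * t)
        / Real.sqrt (Pfun c d t))
      ((((starRingEnd ℂ) c * d).im) ^ 2 / ‖c‖ ^ 3) 0 := by
  set e := ((starRingEnd ℂ) c * d).re with he
  set m := ((starRingEnd ℂ) c * d).im with hm
  set nd := Complex.normSq d with hnd
  have hPne : Pfun c d 0 ≠ 0 := by
    rw [Pfun_zero]; exact fun h => hc (Complex.normSq_eq_zero.1 h)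
  have hs : Real.sqrt (Pfun c d 0) = ‖c‖ := by
    rw [Pfun_zero, ← Complex.norm_def]
  have hane : ‖c‖ ≠ 0 := norm_ne_zero_iff.mpr hc
  have hu : HasDerivAt (fun t : ℝ => e + nd * t) nd 0 := by
    simpa using ((hasDerivAt_id (0:ℝ)).const_mul nd).const_add e
  have hv := sqrtP_hasDerivAt c d 0 hPne
  have h := hu.div hv (by rw [hs]; exact hane)
  refine h.congr_deriv ?_
  rw [hs]
  have habs2 : ‖c‖ ^ 2 = Complex.normSq c := Complex.sq_norm c
  have hid : Complex.normSq c * nd = e ^ 2 + m ^ 2 := by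
    have h2 := Complex.normSq_mul ((starRingEnd ℂ) c) d
    rw [Complex.normSq_conj] at h2
    rw [hnd, ← h2, Complex.normSq_apply, he, hm]; ring
  have key : nd * ‖c‖ ^ 2 = e ^ 2 + m ^ 2 := by rw [habs2]; linarith [hid]
  simp only [← he, ← hnd]
  field_simp
  ring_nf
  linear_combination key

lemma div_sq_helper (bb s mi : ℝ) (h : s ≠ 0) : (bb / s) * (mi / s)^2 = bb * (mi^2 / s^3) := by
  field_simp

end APaux

/-- second derivative of the phase-retrieval objective `F` along a direction.
For isometric `A^*` (Parseval frame condition on the columns `a j` of `A`) and a point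
`x` with `a_j^* x ≠ 0` for all `j ∈ J`, the second derivative of `t ↦ F(x + tζ)` at
`t = 0` equals `‖ζ‖² - Σ_{j ∈ J} (b j / |a_j^* x|) · (Im(conj(phase(a_j^* x))·(a_j^* ζ)))²`. -/
theorem AP_second_derivative {n N : ℕ} (a : Fin N → EuclideanSpace ℂ (Fin n))
    (hiso : ∀ x : EuclideanSpace ℂ (Fin n), ∑ j, (inner ℂ (a j) x : ℂ) • a j = x)
    (x0 : EuclideanSpace ℂ (Fin n))
    (b : Fin N → ℝ) (hb : ∀ j, b j = ‖(inner ℂ (a j) x0 : ℂ)‖)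
    (J : Finset (Fin N)) (hJ : ∀ j, j ∈ J ↔ 0 < b j)
    (F : EuclideanSpace ℂ (Fin n) → ℝ)
    (hF : ∀ x, F x = (1/2) * ∑ j, (‖(inner ℂ (a j) x : ℂ)‖ - b j)^2)
    (x : EuclideanSpace ℂ (Fin n)) (hx : ∀ j ∈ J, (inner ℂ (a j) x : ℂ) ≠ 0)
    (ζ : EuclideanSpace ℂ (Fin n)) :
    HasDerivAt (deriv (fun t : ℝ => F (x + t • ζ)))
      (‖ζ‖^2 -
        ∑ j ∈ J, (b j / ‖(inner ℂ (a j) x : ℂ)‖) *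
          (((starRingEnd ℂ) (phase (inner ℂ (a j) x : ℂ)) *
            (inner ℂ (a j) ζ : ℂ)).im)^2) 0 := by
  classical
  open APaux in
  set c : Fin N → ℂ := fun j => (inner ℂ (a j) x : ℂ) with hcdef
  set d : Fin N → ℂ := fun j => (inner ℂ (a j) ζ : ℂ) with hddef
  set e : Fin N → ℝ := fun j => ((starRingEnd ℂ) (c j) * d j).re with hedef
  set nd : Fin N → ℝ := fun j => Complex.normSq (d j) with hnddef
  have hbnn : ∀ j, 0 ≤ b j := fun j => (hb j) ▸ norm_nonneg _
  have hbJ0 : ∀ j ∉ J, b j = 0 := by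
    intro j hj
    by_contra h
    exact hj ((hJ j).2 (lt_of_le_of_ne (hbnn j) (Ne.symm h)))
  have hcx : ∀ j ∈ J, c j ≠ 0 := hx
  have hsm : ∀ (t : ℝ) (y : EuclideanSpace ℂ (Fin n)), t • y = (t : ℂ) • y := by
    intro t y
    rw [← algebraMap_smul ℂ t y, Complex.coe_algebraMap]
  have hinner : ∀ (j : Fin N) (t : ℝ), (inner ℂ (a j) (x + t • ζ) : ℂ) = c j + (t : ℂ) * d j := by
    intro j t
    rw [inner_add_right, hsm, inner_smul_right]
  set G : ℝ → ℝ := fun t => (1/2) * ∑ j, Pfun (c j) (d j) t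
      - ∑ j ∈ J, b j * Real.sqrt (Pfun (c j) (d j) t) + (1/2) * ∑ j, (b j)^2 with hGdef
  have hG : (fun t : ℝ => F (x + t • ζ)) = G := by
    funext t
    rw [hF]
    have h1 : ∀ j : Fin N, (‖(inner ℂ (a j) (x + t • ζ) : ℂ)‖ - b j)^2
        = Pfun (c j) (d j) t - 2 * (b j * Real.sqrt (Pfun (c j) (d j) t)) + (b j)^2 := by
      intro j
      rw [hinner]
      rw [show ‖c j + (t:ℂ) * d j‖ = Real.sqrt (Pfun (c j) (d j) t) from
        Complex.norm_def _]
      rw [sub_sq, Real.sq_sqrt (Pfun_nonneg _ _ _)]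
      ring
    simp_rw [h1]
    rw [Finset.sum_add_distrib, Finset.sum_sub_distrib, ← Finset.mul_sum]
    have h2 : ∑ j, b j * Real.sqrt (Pfun (c j) (d j) t)
        = ∑ j ∈ J, b j * Real.sqrt (Pfun (c j) (d j) t) :=
      (Finset.sum_subset (Finset.subset_univ J) (fun j _ hj => by rw [hbJ0 j hj]; ring)).symm
    rw [h2, hGdef]
    ring
  set G' : ℝ → ℝ := fun t => (∑ j, (e j + nd j * t))
      - ∑ j ∈ J, b j * ((e j + nd j * t) / Real.sqrt (Pfun (c j) (d j) t)) with hG'def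
  have hGd : ∀ t : ℝ, (∀ j ∈ J, Pfun (c j) (d j) t ≠ 0) → HasDerivAt G (G' t) t := by
    intro t ht
    have hA : HasDerivAt (fun s => (1/2) * ∑ j, Pfun (c j) (d j) s)
        (∑ j, (e j + nd j * t)) t := by
      have h1 := (HasDerivAt.fun_sum (u := (Finset.univ : Finset (Fin N)))
        (fun j _ => Pfun_hasDerivAt (c j) (d j) t)).const_mul
        (1/2 : ℝ)
      refine h1.congr_deriv ?_
      rw [Finset.mul_sum]
      exact Finset.sum_congr rfl fun j _ => by simp [hedef, hnddef]; ring
    have hB : HasDerivAt (fun s => ∑ j ∈ J, b j * Real.sqrt (Pfun (c j) (d j) s))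
        (∑ j ∈ J, b j * ((e j + nd j * t) / Real.sqrt (Pfun (c j) (d j) t))) t := by
      refine HasDerivAt.fun_sum fun j hj => ?_
      have h1 := (sqrtP_hasDerivAt (c j) (d j) t (ht j hj)).const_mul (b j)
      refine h1.congr_deriv ?_
      rw [show 2 * ((starRingEnd ℂ) (c j) * d j).re + 2 * Complex.normSq (d j) * t
            = 2 * (e j + nd j * t) by simp [hedef, hnddef]; ring,
        mul_div_mul_left _ _ (two_ne_zero)]
    exact (hA.sub hB).add_const _
  have hev : ∀ᶠ t in nhds (0:ℝ), ∀ j ∈ J, Pfun (c j) (d j) t ≠ 0 := by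
    rw [Filter.eventually_all_finset]
    intro j hj
    refine ((Pfun_cont (c j) (d j)).continuousAt).eventually_ne ?_
    rw [Pfun_zero]
    exact fun h => hcx j hj (Complex.normSq_eq_zero.1 h)
  have heq : deriv (fun t : ℝ => F (x + t • ζ)) =ᶠ[nhds (0:ℝ)] G' := by
    refine hev.mono fun t ht => ?_
    rw [hG]
    exact (hGd t ht).deriv
  have hpar : ∑ j, nd j = ‖ζ‖^2 := by
    have h1 : (inner ℂ ζ (∑ j, (inner ℂ (a j) ζ : ℂ) • a j) : ℂ) = inner ℂ ζ ζ := by rw [hiso ζ]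
    rw [inner_sum, inner_self_eq_norm_sq_to_K] at h1
    have h2 : ∀ j : Fin N, (inner ℂ ζ ((inner ℂ (a j) ζ : ℂ) • a j) : ℂ)
        = (Complex.normSq (d j) : ℂ) := by
      intro j
      rw [inner_smul_right, ← inner_conj_symm ζ (a j)]
      exact Complex.mul_conj _
    rw [Finset.sum_congr rfl (fun j _ => h2 j)] at h1
    simp only [hnddef]
    have h4 := congrArg Complex.re h1
    have h4 := congrArg Complex.re h1
    simp only [Complex.re_sum, Complex.ofReal_re] at h4
    have h5 : ((‖ζ‖ : ℂ)) = (RCLike.ofReal ‖ζ‖ : ℂ) := rfl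
    rw [← h5, ← Complex.ofReal_pow, Complex.ofReal_re] at h4
    exact h4
  have hA' : HasDerivAt (fun t : ℝ => ∑ j, (e j + nd j * t)) (∑ j, nd j) 0 := by
    refine HasDerivAt.fun_sum fun j _ => ?_
    simpa using ((hasDerivAt_id (0:ℝ)).const_mul (nd j)).const_add (e j)
  have hB' : HasDerivAt
      (fun t : ℝ => ∑ j ∈ J, b j * ((e j + nd j * t) / Real.sqrt (Pfun (c j) (d j) t)))
      (∑ j ∈ J, b j * ((((starRingEnd ℂ) (c j) * d j).im)^2 / ‖c j‖ ^ 3)) 0 :=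
    HasDerivAt.fun_sum fun j hj => (ratio_hasDerivAt (c j) (d j) (hcx j hj)).const_mul (b j)
  have hval : ‖ζ‖^2 - ∑ j ∈ J, (b j / ‖c j‖) *
        (((starRingEnd ℂ) (phase (c j)) * d j).im)^2
      = (∑ j, nd j) - ∑ j ∈ J, b j * ((((starRingEnd ℂ) (c j) * d j).im)^2
          / ‖c j‖ ^ 3) := by
    rw [hpar]
    congr 1
    refine Finset.sum_congr rfl fun j hj => ?_
    have hcj : c j ≠ 0 := hcx j hj
    have hane : ‖c j‖ ≠ 0 := norm_ne_zero_iff.mpr hcj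
    rw [phase, if_neg hcj, map_div₀, Complex.conj_ofReal,
      div_mul_eq_mul_div ((starRingEnd ℂ) (c j)), Complex.div_ofReal_im]
    exact div_sq_helper _ _ _ hane
  have hfin : HasDerivAt G' (‖ζ‖^2 - ∑ j ∈ J, (b j / ‖c j‖) *
      (((starRingEnd ℂ) (phase (c j)) * d j).im)^2) 0 := by
    rw [hG'def, hval]
    exact hA'.sub hB'
  exact hfin.congr_of_eventuallyEq heq
end

section
/- Let n ≥ 2, let A ∈ ℂ^{n×N} satisfy A A^* = I_n, let x0 ∈ ℝ^n ⊆ ℂ^n be nonzero, and let B = A · diag(phase(A^* x0)). Then the orthogonality constraint can be removed in the definition of the second singular value over real vectors: sup{ ‖Im(B^* u)‖ : u ∈ ℝ^n, ⟨u, x0⟩ = 0, ‖u‖ = 1 } = sup{ ‖Im(B^* u)‖ : u ∈ ℝ^n, ‖u‖ = 1 }. -/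
lemma phase_mul_im (z : ℂ) : ((starRingEnd ℂ) (phase z) * z).im = 0 := by
  unfold phase
  by_cases h : z = 0
  · simp [h]
  · rw [if_neg h, map_div₀, Complex.conj_ofReal, div_mul_eq_mul_div,
      ← Complex.normSq_eq_conj_mul_self, ← Complex.ofReal_div]
    simp

lemma real_inner_im_zero {n : ℕ} (p q : EuclideanSpace ℂ (Fin n)) (hp : ∀ i, (p i).im = 0)
    (hq : ∀ i, (q i).im = 0) : (inner ℂ p q : ℂ).im = 0 := by
  simp only [PiLp.inner_apply, RCLike.inner_apply, Complex.im_sum]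
  refine Finset.sum_eq_zero fun i _ => ?_
  simp [Complex.mul_im, hp i, hq i, RCLike.star_def]

lemma parseval_sum {n N : ℕ} (a : Fin N → EuclideanSpace ℂ (Fin n))
    (hiso : ∀ x : EuclideanSpace ℂ (Fin n), ∑ j, (inner ℂ (a j) x : ℂ) • a j = x)
    (u : EuclideanSpace ℂ (Fin n)) :
    ∑ j, Complex.normSq (inner ℂ (a j) u : ℂ) = ‖u‖^2 := by
  have h : (inner ℂ u (∑ j, (inner ℂ (a j) u : ℂ) • a j) : ℂ) = inner ℂ u u := by rw [hiso]
  rw [inner_sum] at h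
  simp only [inner_smul_right] at h
  have h2 : ∀ j ∈ Finset.univ, (inner ℂ (a j) u : ℂ) * (inner ℂ u (a j) : ℂ)
      = (Complex.normSq (inner ℂ (a j) u) : ℂ) := by
    intro j _
    rw [← inner_conj_symm (a j) u, ← Complex.normSq_eq_conj_mul_self, Complex.normSq_conj]
  rw [Finset.sum_congr rfl h2, inner_self_eq_norm_sq_to_K] at h
  have h' : ((∑ j, Complex.normSq (inner ℂ (a j) u) : ℝ) : ℂ) = ((‖u‖^2 : ℝ) : ℂ) := by
    push_cast; exact h
  exact_mod_cast h'

lemma real_smul_eqC {n : ℕ} (r : ℝ) (x : EuclideanSpace ℂ (Fin n)) :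
    r • x = (r : ℂ) • x := by
  ext i
  simp [Complex.real_smul]

lemma inner_real_smul_left' {n : ℕ} (r : ℝ) (x y : EuclideanSpace ℂ (Fin n)) :
    (inner ℂ (r • x) y : ℂ) = (r : ℂ) * inner ℂ x y := by
  rw [real_smul_eqC, inner_smul_left, Complex.conj_ofReal]

lemma inner_real_smul_right' {n : ℕ} (r : ℝ) (x y : EuclideanSpace ℂ (Fin n)) :
    (inner ℂ x (r • y) : ℂ) = (r : ℂ) * inner ℂ x y := by
  rw [real_smul_eqC, inner_smul_right]

/-- for `n ≥ 2`, isometric `A^*` (Parseval frame condition on the columns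
`a j` of `A`) and a nonzero real vector `x0`, the orthogonality constraint `⟨u, x0⟩ = 0`
can be removed in the definition of the second singular value over real vectors:
`sup{‖Im(B^* u)‖ : u real, ⟨u,x0⟩ = 0, ‖u‖=1} = sup{‖Im(B^* u)‖ : u real, ‖u‖=1}`,
where `(B^* u) j = conj(phase(a_j^* x0))·(a_j^* u)`. -/
theorem real_constraint_removal {n N : ℕ} (hn : 2 ≤ n)
    (a : Fin N → EuclideanSpace ℂ (Fin n))
    (hiso : ∀ x : EuclideanSpace ℂ (Fin n), ∑ j, (inner ℂ (a j) x : ℂ) • a j = x)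
    (x0 : EuclideanSpace ℂ (Fin n)) (hx0 : x0 ≠ 0) (hreal : ∀ i, (x0 i).im = 0)
    (ImB : EuclideanSpace ℂ (Fin n) → ℝ)
    (hImB : ∀ u, ImB u = Real.sqrt (∑ j,
      (((starRingEnd ℂ) (phase (inner ℂ (a j) x0 : ℂ)) * (inner ℂ (a j) u : ℂ)).im) ^ 2)) :
    sSup {r : ℝ | ∃ u : EuclideanSpace ℂ (Fin n), (∀ i, (u i).im = 0) ∧
        (inner ℂ u x0 : ℂ).re = 0 ∧ ‖u‖ = 1 ∧ r = ImB u}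
      = sSup {r : ℝ | ∃ u : EuclideanSpace ℂ (Fin n), (∀ i, (u i).im = 0) ∧
        ‖u‖ = 1 ∧ r = ImB u} := by
  set φ : Fin N → ℂ := fun j => (starRingEnd ℂ) (phase (inner ℂ (a j) x0 : ℂ)) with hφ
  set S1 := {r : ℝ | ∃ u : EuclideanSpace ℂ (Fin n), (∀ i, (u i).im = 0) ∧
      (inner ℂ u x0 : ℂ).re = 0 ∧ ‖u‖ = 1 ∧ r = ImB u} with hS1
  set S2 := {r : ℝ | ∃ u : EuclideanSpace ℂ (Fin n), (∀ i, (u i).im = 0) ∧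
      ‖u‖ = 1 ∧ r = ImB u} with hS2
  -- every element of S2 is at most 1
  have hbound : ∀ r ∈ S2, r ≤ 1 := by
    rintro r ⟨u, -, hu1, rfl⟩
    rw [hImB]
    have hle : ∑ j, ((φ j * (inner ℂ (a j) u : ℂ)).im) ^ 2
        ≤ ∑ j, Complex.normSq (inner ℂ (a j) u : ℂ) := by
      refine Finset.sum_le_sum fun j _ => ?_
      have h1 : ((φ j * (inner ℂ (a j) u : ℂ)).im) ^ 2
          ≤ Complex.normSq (φ j * (inner ℂ (a j) u : ℂ)) := by
        rw [Complex.normSq_apply]; nlinarith [sq_nonneg (φ j * (inner ℂ (a j) u : ℂ)).re]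
      have h2 : Complex.normSq (φ j * (inner ℂ (a j) u : ℂ))
          = Complex.normSq (inner ℂ (a j) u : ℂ) := by
        rw [Complex.normSq_mul, hφ, Complex.normSq_conj, ← Complex.sq_norm, phase_abs]
        ring
      linarith
    rw [parseval_sum a hiso u, hu1] at hle
    calc Real.sqrt (∑ j, ((φ j * (inner ℂ (a j) u : ℂ)).im) ^ 2)
        ≤ Real.sqrt 1 := Real.sqrt_le_sqrt (by simpa using hle)
      _ = 1 := Real.sqrt_one
  have hne2 : S2.Nonempty := by
    refine ⟨ImB ((‖x0‖⁻¹ : ℝ) • x0), (‖x0‖⁻¹ : ℝ) • x0, ?_, norm_smul_inv_norm hx0, rfl⟩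
    intro i
    simp [PiLp.smul_apply, Complex.smul_im, hreal i]
  have hne1 : S1.Nonempty := by
    set i0 : Fin n := ⟨0, by omega⟩ with hi0
    set i1 : Fin n := ⟨1, by omega⟩ with hi1
    have hne : i1 ≠ i0 := by simp [hi0, hi1, Fin.ext_iff]
    by_cases hc : x0 i0 = 0
    · refine ⟨_, EuclideanSpace.single i0 (1 : ℂ), ?_, ?_, ?_, rfl⟩
      · intro i
        rw [EuclideanSpace.single_apply]
        split <;> simp
      · simp [EuclideanSpace.inner_single_left, hc]
      · simp [EuclideanSpace.norm_single]
    · set w0 : EuclideanSpace ℂ (Fin n) :=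
        (x0 i1) • EuclideanSpace.single i0 (1 : ℂ)
          - (x0 i0) • EuclideanSpace.single i1 (1 : ℂ) with hw0def
      have hw0i : ∀ i, (w0 i).im = 0 := by
        intro i
        have : w0 i = x0 i1 * (if i = i0 then 1 else 0) - x0 i0 * (if i = i1 then 1 else 0) := by
          simp [hw0def, EuclideanSpace.single_apply, smul_eq_mul]
        rw [this]
        split_ifs <;> simp [Complex.sub_im, Complex.mul_im, hreal]
      have hw0ne : w0 ≠ 0 := by
        intro h
        have h1 : w0 i1 = 0 := by rw [h]; rfl
        have h2 : w0 i1 = -(x0 i0) := by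
          simp [hw0def, EuclideanSpace.single_apply, smul_eq_mul, hne]
        rw [h2] at h1
        exact hc (by simpa using h1)
      have hinner : (inner ℂ w0 x0 : ℂ) = 0 := by
        rw [hw0def, inner_sub_left, inner_smul_left, inner_smul_left]
        simp only [EuclideanSpace.inner_single_left, map_one, one_mul]
        rw [Complex.conj_eq_iff_im.mpr (hreal i0), Complex.conj_eq_iff_im.mpr (hreal i1)]
        ring
      refine ⟨_, (‖w0‖⁻¹ : ℝ) • w0, ?_, ?_, norm_smul_inv_norm hw0ne, rfl⟩
      · intro i
        simp [PiLp.smul_apply, Complex.smul_im, hw0i i]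
      · rw [inner_real_smul_left', hinner, mul_zero, Complex.zero_re]
  have hbdd2 : BddAbove S2 := ⟨1, fun r hr => hbound r hr⟩
  have hbdd1 : BddAbove S1 := ⟨1, fun r hr => hbound r (by
    obtain ⟨u, h1, _, h3, h4⟩ := hr; exact ⟨u, h1, h3, h4⟩)⟩
  -- the key reduction
  have hkey : ∀ r ∈ S2, ∃ r' ∈ S1, r ≤ r' := by
    rintro r ⟨u, hu, hu1, rfl⟩
    have hx0n : ‖x0‖ ≠ 0 := norm_ne_zero_iff.mpr hx0
    set c : ℂ := (((‖x0‖ ^ 2)⁻¹ : ℝ) : ℂ) * (inner ℂ x0 u : ℂ) with hcdef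
    have hcim : c.im = 0 := by
      have him : (inner ℂ x0 u : ℂ).im = 0 := real_inner_im_zero x0 u hreal hu
      rw [hcdef, Complex.mul_im, Complex.ofReal_re, Complex.ofReal_im, him]
      ring
    set w : EuclideanSpace ℂ (Fin n) := u - c • x0 with hwdef
    have hw_real : ∀ i, (w i).im = 0 := by
      intro i
      have : w i = u i - c * x0 i := by simp [hwdef, smul_eq_mul]
      rw [this]
      simp [Complex.sub_im, Complex.mul_im, hcim, hreal i, hu i]
    have hx0w : (inner ℂ x0 w : ℂ) = 0 := by
      rw [hwdef, inner_sub_right, inner_smul_right, inner_self_eq_norm_sq_to_K, hcdef]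
      have hx2 : ((‖x0‖ : ℂ) ^ 2) ≠ 0 := by
        simpa using pow_ne_zero 2 (by exact_mod_cast hx0n : (‖x0‖ : ℂ) ≠ 0)
      field_simp
      push_cast
      simp [hx0]
    have hwx0 : (inner ℂ w x0 : ℂ) = 0 := by
      have := congrArg (starRingEnd ℂ) hx0w
      simpa [mul_comm] using this
    have hterm : ∀ j, (φ j * (inner ℂ (a j) u : ℂ)).im = (φ j * (inner ℂ (a j) w : ℂ)).im := by
      intro j
      have hu_eq : u = w + c • x0 := by rw [hwdef]; abel
      rw [show (inner ℂ (a j) u : ℂ) = inner ℂ (a j) (w + c • x0) from by rw [← hu_eq],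
        inner_add_right, inner_smul_right, mul_add, Complex.add_im]
      have hz : (φ j * (c * (inner ℂ (a j) x0 : ℂ))).im = 0 := by
        rw [mul_left_comm, Complex.mul_im, hcim, phase_mul_im]
        ring
      rw [hz, add_zero]
    by_cases hw0 : w = 0
    · have hzero : ImB u = 0 := by
        rw [hImB]
        have hz : ∀ j ∈ Finset.univ, ((φ j * (inner ℂ (a j) u : ℂ)).im) ^ 2 = 0 := by
          intro j _
          rw [hterm j, hw0]
          simp
        rw [Finset.sum_congr rfl hz]
        simp
      obtain ⟨r', hr'⟩ := hne1
      refine ⟨r', hr', ?_⟩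
      rw [hzero]
      obtain ⟨v, -, -, -, rfl⟩ := hr'
      rw [hImB]
      exact Real.sqrt_nonneg _
    · set v : EuclideanSpace ℂ (Fin n) := (‖w‖⁻¹ : ℝ) • w with hvdef
      have hwn : ‖w‖ ≠ 0 := norm_ne_zero_iff.mpr hw0
      have hv_real : ∀ i, (v i).im = 0 := by
        intro i
        simp [hvdef, PiLp.smul_apply, Complex.smul_im, hw_real i]
      have hv_orth : (inner ℂ v x0 : ℂ).re = 0 := by
        rw [hvdef, inner_real_smul_left', hwx0, mul_zero, Complex.zero_re]
      have hv_norm : ‖v‖ = 1 := norm_smul_inv_norm hw0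
      -- ‖w‖ ≤ 1
      have hww : (inner ℂ w w : ℂ) = inner ℂ w u := by
        calc (inner ℂ w w : ℂ) = inner ℂ w (u - c • x0) := by rw [← hwdef]
          _ = (inner ℂ w u : ℂ) - c * inner ℂ w x0 := by rw [inner_sub_right, inner_smul_right]
          _ = inner ℂ w u := by rw [hwx0, mul_zero, sub_zero]
      have hwsq : ‖w‖ ^ 2 ≤ ‖w‖ := by
        have h2' : ‖w‖ ^ 2 = (inner ℂ w u : ℂ).re := by
          rw [← hww, inner_self_eq_norm_sq_to_K]
          simp [← Complex.ofReal_pow]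
        have h3 : (inner ℂ w u : ℂ).re ≤ ‖(inner ℂ w u : ℂ)‖ := Complex.re_le_norm _
        have h4 : ‖(inner ℂ w u : ℂ)‖ ≤ ‖w‖ * ‖u‖ := norm_inner_le_norm w u
        rw [hu1, mul_one] at h4
        linarith
      have hwle1 : ‖w‖ ≤ 1 := by nlinarith [norm_nonneg w]
      have hscale : ∀ j, (inner ℂ (a j) w : ℂ) = (‖w‖ : ℂ) * (inner ℂ (a j) v : ℂ) := by
        intro j
        rw [hvdef, inner_real_smul_right', ← mul_assoc, ← Complex.ofReal_mul,
          mul_inv_cancel₀ hwn, Complex.ofReal_one, one_mul]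
      refine ⟨ImB v, ⟨v, hv_real, hv_orth, hv_norm, rfl⟩, ?_⟩
      rw [hImB, hImB]
      apply Real.sqrt_le_sqrt
      refine Finset.sum_le_sum fun j _ => ?_
      rw [hterm j, hscale j, mul_left_comm, Complex.mul_im, Complex.ofReal_re,
        Complex.ofReal_im, zero_mul, add_zero]
      have hnn := sq_nonneg ((φ j * (inner ℂ (a j) v : ℂ)).im)
      nlinarith [norm_nonneg w]
  apply le_antisymm
  · exact csSup_le_csSup hbdd2 hne1 (fun r hr => by
      obtain ⟨u, h1, _, h3, h4⟩ := hr; exact ⟨u, h1, h3, h4⟩)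
  · refine csSup_le hne2 fun r hr => ?_
    obtain ⟨r', hr', hle⟩ := hkey r hr
    exact hle.trans (le_csSup hbdd1 hr')
end
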